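/- K_{>0} is a two-sided ideal of the algebra K_{≥0} (i.e. K_{≥0} · K_{>0} ⊆ K_{>0} and K_{>0} · K_{≥0} ⊆ K_{>0}) and a coideal of B: Δ(K_{>0}) ⊆ K_{≥0} ⊗ K_{>0} + K_{>0} ⊗ B and ε(K_{>0}) = 0. -/

import Mathlib

open TensorProduct

noncomputable section

/-- The standard inner product on `ℤ^θ`: `(α|ω) = Σ_i α_i ω_i`. -/
def innerZ {θ : ℕ} (α ω : Fin θ → ℤ) : ℤ := ∑ i, α i * ω i

variable {k : Type*} [Field k] {B : Type*} [Ring B] [Bialgebra k B]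

/-- The image of `p ⊗ q` inside `B ⊗[k] B`, for submodules `p, q ⊆ B`. -/
def tpSub (p q : Submodule k B) : Submodule k (B ⊗[k] B) :=
  LinearMap.range (TensorProduct.map p.subtype q.subtype)

variable {θ : ℕ}

/-- `B_{≥0} = ⊕_{(α|ω) ≥ 0} B^α`. -/
def Bge (𝒜 : (Fin θ → ℤ) → Submodule k B) (ω : Fin θ → ℤ) : Submodule k B :=
  ⨆ (α : Fin θ → ℤ) (_ : 0 ≤ innerZ α ω), 𝒜 α

/-- `B_{>0} = ⊕_{(α|ω) > 0} B^α`. -/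
def Bgt (𝒜 : (Fin θ → ℤ) → Submodule k B) (ω : Fin θ → ℤ) : Submodule k B :=
  ⨆ (α : Fin θ → ℤ) (_ : 0 < innerZ α ω), 𝒜 α

/-- `B_0 = ⊕_{(α|ω) = 0} B^α`. -/
def Bzero (𝒜 : (Fin θ → ℤ) → Submodule k B) (ω : Fin θ → ℤ) : Submodule k B :=
  ⨆ (α : Fin θ → ℤ) (_ : innerZ α ω = 0), 𝒜 α

/-- `K_{≥0} = {x ∈ B : Δ(x) ∈ B_{≥0} ⊗ B}`. -/
def Kge (𝒜 : (Fin θ → ℤ) → Submodule k B) (ω : Fin θ → ℤ) : Submodule k B :=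
  Submodule.comap (Coalgebra.comul (R := k)) (tpSub (Bge 𝒜 ω) ⊤)

/-- `K_{>0} = K_{≥0} ∩ B_{>0}`. -/
def Kgt (𝒜 : (Fin θ → ℤ) → Submodule k B) (ω : Fin θ → ℤ) : Submodule k B :=
  Kge 𝒜 ω ⊓ Bgt 𝒜 ω

/-- `K_0 = K_{≥0} ∩ B_0`. -/
def Kzero (𝒜 : (Fin θ → ℤ) → Submodule k B) (ω : Fin θ → ℤ) : Submodule k B :=
  Kge 𝒜 ω ⊓ Bzero 𝒜 ω


namespace St5
set_option linter.unusedSectionVars false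
set_option synthInstance.maxHeartbeats 800000
set_option maxHeartbeats 1600000
variable {k : Type*} [Field k]

section Basic
variable {M N M' N' : Type*} [AddCommGroup M] [AddCommGroup N] [AddCommGroup M'] [AddCommGroup N']
  [Module k M] [Module k N] [Module k M'] [Module k N']


def tpS (p : Submodule k M) (q : Submodule k N) : Submodule k (M ⊗[k] N) :=
  LinearMap.range (TensorProduct.map p.subtype q.subtype)

theorem tmul_mem_tpS {p : Submodule k M} {q : Submodule k N} {a : M} {b : N}
    (ha : a ∈ p) (hb : b ∈ q) : a ⊗ₜ[k] b ∈ tpS p q :=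
  ⟨(⟨a, ha⟩ : p) ⊗ₜ[k] (⟨b, hb⟩ : q), rfl⟩

theorem tpS_ind {p : Submodule k M} {q : Submodule k N} {P : M ⊗[k] N → Prop} (h0 : P 0)
    (htmul : ∀ a ∈ p, ∀ b ∈ q, P (a ⊗ₜ[k] b)) (hadd : ∀ s t, P s → P t → P (s + t)) :
    ∀ t ∈ tpS p q, P t := by
  rintro _ ⟨s, rfl⟩
  induction s using TensorProduct.induction_on with
  | zero => rw [map_zero]; exact h0
  | tmul a b => exact htmul a a.2 b b.2
  | add s t hs ht => rw [map_add]; exact hadd _ _ hs ht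

theorem map_tpS {p : Submodule k M} {q : Submodule k N} {p' : Submodule k M'} {q' : Submodule k N'}
    (f : M →ₗ[k] M') (g : N →ₗ[k] N') (hf : ∀ a ∈ p, f a ∈ p') (hg : ∀ b ∈ q, g b ∈ q')
    {t : M ⊗[k] N} (ht : t ∈ tpS p q) : TensorProduct.map f g t ∈ tpS p' q' := by
  refine tpS_ind (P := fun t => TensorProduct.map f g t ∈ tpS p' q')
    (by show TensorProduct.map f g 0 ∈ tpS p' q'; rw [map_zero]; exact zero_mem _) (fun a ha b hb => ?_) (fun s t hs ht => ?_) t ht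
  · show TensorProduct.map f g (a ⊗ₜ[k] b) ∈ tpS p' q'
    rw [TensorProduct.map_tmul]; exact tmul_mem_tpS (hf a ha) (hg b hb)
  · show TensorProduct.map f g (s + t) ∈ tpS p' q'
    rw [map_add]; exact add_mem hs ht

theorem mem_tpS_top_top (t : M ⊗[k] N) : t ∈ tpS (⊤ : Submodule k M) (⊤ : Submodule k N) := by
  induction t using TensorProduct.induction_on with
  | zero => exact zero_mem _
  | tmul a b => exact tmul_mem_tpS trivial trivial
  | add s t hs ht => exact add_mem hs ht

theorem lTensor_rTensor_apply (f : M →ₗ[k] M') (g : N →ₗ[k] N') (z : M ⊗[k] N) :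
    g.lTensor M' (f.rTensor N z) = TensorProduct.map f g z := by
  rw [← LinearMap.comp_apply, LinearMap.lTensor_comp_rTensor]

theorem rTensor_lTensor_apply (f : M →ₗ[k] M') (g : N →ₗ[k] N') (z : M ⊗[k] N) :
    f.rTensor N' (g.lTensor M z) = TensorProduct.map f g z := by
  rw [← LinearMap.comp_apply, LinearMap.rTensor_comp_lTensor]

/-- right contraction: `a ⊗ b ↦ φ b • a`. -/
def ctrR (φ : N →ₗ[k] k) : M ⊗[k] N →ₗ[k] M :=
  TensorProduct.lift (((LinearMap.lsmul k M).comp φ).flip)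

@[simp] theorem ctrR_tmul (φ : N →ₗ[k] k) (a : M) (b : N) : ctrR φ (a ⊗ₜ[k] b) = φ b • a := rfl

/-- left contraction: `a ⊗ b ↦ ψ a • b`. -/
def ctrL (ψ : M →ₗ[k] k) : M ⊗[k] N →ₗ[k] N :=
  TensorProduct.lift ((LinearMap.lsmul k N).comp ψ)

@[simp] theorem ctrL_tmul (ψ : M →ₗ[k] k) (a : M) (b : N) : ctrL ψ (a ⊗ₜ[k] b) = ψ a • b := rfl

theorem ctrR_mem_tpS {p : Submodule k M} {q : Submodule k N} {t : M ⊗[k] N}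
    (ht : t ∈ tpS p q) (φ : N →ₗ[k] k) : ctrR φ t ∈ p := by
  refine tpS_ind (P := fun t => ctrR φ t ∈ p) (by simp) (fun a ha b hb => ?_)
    (fun s t hs ht => ?_) t ht
  · show ctrR φ (a ⊗ₜ[k] b) ∈ p
    rw [ctrR_tmul]; exact p.smul_mem _ ha
  · show ctrR φ (s + t) ∈ p
    rw [map_add]; exact add_mem hs ht

theorem ctrL_mem_tpS {p : Submodule k M} {q : Submodule k N} {t : M ⊗[k] N}
    (ht : t ∈ tpS p q) (ψ : M →ₗ[k] k) : ctrL ψ t ∈ q := by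
  refine tpS_ind (P := fun t => ctrL ψ t ∈ q) (by simp) (fun a ha b hb => ?_)
    (fun s t hs ht => ?_) t ht
  · show ctrL ψ (a ⊗ₜ[k] b) ∈ q
    rw [ctrL_tmul]; exact q.smul_mem _ hb
  · show ctrL ψ (s + t) ∈ q
    rw [map_add]; exact add_mem hs ht



theorem exists_fin_rep (t : M ⊗[k] N) : ∃ (n : ℕ) (u : Fin n → M) (v : Fin n → N),
    t = ∑ i, u i ⊗ₜ[k] v i := by
  induction t using TensorProduct.induction_on with
  | zero => exact ⟨0, fun i => i.elim0, fun i => i.elim0, by simp⟩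
  | tmul a b => exact ⟨1, fun _ => a, fun _ => b, by simp⟩
  | add s t hs ht =>
    obtain ⟨n, u, v, rfl⟩ := hs; obtain ⟨m, u', v', rfl⟩ := ht
    refine ⟨n + m, Fin.append u u', Fin.append v v', ?_⟩
    rw [Fin.sum_univ_add]
    simp [Fin.append_left, Fin.append_right]

theorem exists_rep_li (t : M ⊗[k] N) : ∃ (n : ℕ) (u : Fin n → M) (v : Fin n → N),
    t = ∑ i, u i ⊗ₜ[k] v i ∧ LinearIndependent k u ∧ LinearIndependent k v := by
  classical
  have hex : ∃ n : ℕ, ∃ (u : Fin n → M) (v : Fin n → N), t = ∑ i, u i ⊗ₜ[k] v i := by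
    obtain ⟨n, u, v, h⟩ := exists_fin_rep t; exact ⟨n, u, v, h⟩
  obtain ⟨n, hn, hmin⟩ : ∃ n, (∃ (u : Fin n → M) (v : Fin n → N), t = ∑ i, u i ⊗ₜ[k] v i) ∧
      ∀ m, m < n → ¬ (∃ (u : Fin m → M) (v : Fin m → N), t = ∑ i, u i ⊗ₜ[k] v i) :=
    ⟨Nat.find hex, Nat.find_spec hex, fun m hm => Nat.find_min hex hm⟩
  obtain ⟨u, v, ht⟩ := hn
  refine ⟨n, u, v, ht, ?_, ?_⟩
  · by_contra hu
    obtain ⟨g, hg, i, hgi⟩ := Fintype.not_linearIndependent_iff.mp hu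
    obtain ⟨m, rfl⟩ : ∃ m, n = m + 1 :=
      ⟨n - 1, (Nat.succ_pred_eq_of_pos i.pos).symm⟩
    refine hmin m (Nat.lt_succ_self m) ⟨fun j => u (i.succAbove j),
      fun j => (-(g i)⁻¹ * g (i.succAbove j)) • v i + v (i.succAbove j), ?_⟩
    have key : ∑ j : Fin m, (-(g i)⁻¹ * g (i.succAbove j)) • u (i.succAbove j) = u i := by
      have h1 : g i • u i + ∑ j : Fin m, g (i.succAbove j) • u (i.succAbove j) = 0 := by
        rw [← Fin.sum_univ_succAbove (fun j => g j • u j) i]; exact hg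
      have h2 : ∑ j : Fin m, g (i.succAbove j) • u (i.succAbove j) = -(g i • u i) := by
        linear_combination (norm := module) h1
      calc ∑ j : Fin m, (-(g i)⁻¹ * g (i.succAbove j)) • u (i.succAbove j)
          = (-(g i)⁻¹) • ∑ j : Fin m, g (i.succAbove j) • u (i.succAbove j) := by
            rw [Finset.smul_sum]; simp [smul_smul]
        _ = (-(g i)⁻¹) • (-(g i • u i)) := by rw [h2]
        _ = ((g i)⁻¹ * g i) • u i := by module
        _ = u i := by rw [inv_mul_cancel₀ hgi, one_smul]
    calc t = ∑ j, u j ⊗ₜ[k] v j := ht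
      _ = u i ⊗ₜ[k] v i + ∑ j : Fin m, u (i.succAbove j) ⊗ₜ[k] v (i.succAbove j) :=
        Fin.sum_univ_succAbove (fun j => u j ⊗ₜ[k] v j) i
      _ = ∑ j : Fin m, u (i.succAbove j) ⊗ₜ[k]
            ((-(g i)⁻¹ * g (i.succAbove j)) • v i + v (i.succAbove j)) := by
        rw [← key]
        rw [TensorProduct.sum_tmul, ← Finset.sum_add_distrib]
        congr 1; funext j
        rw [TensorProduct.tmul_add, TensorProduct.smul_tmul]
  · by_contra hv
    obtain ⟨g, hg, i, hgi⟩ := Fintype.not_linearIndependent_iff.mp hv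
    obtain ⟨m, rfl⟩ : ∃ m, n = m + 1 :=
      ⟨n - 1, (Nat.succ_pred_eq_of_pos i.pos).symm⟩
    refine hmin m (Nat.lt_succ_self m) ⟨fun j => (-(g i)⁻¹ * g (i.succAbove j)) • u i + u (i.succAbove j),
      fun j => v (i.succAbove j), ?_⟩
    have key : ∑ j : Fin m, (-(g i)⁻¹ * g (i.succAbove j)) • v (i.succAbove j) = v i := by
      have h1 : g i • v i + ∑ j : Fin m, g (i.succAbove j) • v (i.succAbove j) = 0 := by
        rw [← Fin.sum_univ_succAbove (fun j => g j • v j) i]; exact hg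
      have h2 : ∑ j : Fin m, g (i.succAbove j) • v (i.succAbove j) = -(g i • v i) := by
        linear_combination (norm := module) h1
      calc ∑ j : Fin m, (-(g i)⁻¹ * g (i.succAbove j)) • v (i.succAbove j)
          = (-(g i)⁻¹) • ∑ j : Fin m, g (i.succAbove j) • v (i.succAbove j) := by
            rw [Finset.smul_sum]; simp [smul_smul]
        _ = (-(g i)⁻¹) • (-(g i • v i)) := by rw [h2]
        _ = ((g i)⁻¹ * g i) • v i := by module
        _ = v i := by rw [inv_mul_cancel₀ hgi, one_smul]
    calc t = ∑ j, u j ⊗ₜ[k] v j := ht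
      _ = u i ⊗ₜ[k] v i + ∑ j : Fin m, u (i.succAbove j) ⊗ₜ[k] v (i.succAbove j) :=
        Fin.sum_univ_succAbove (fun j => u j ⊗ₜ[k] v j) i
      _ = ∑ j : Fin m, ((-(g i)⁻¹ * g (i.succAbove j)) • u i + u (i.succAbove j)) ⊗ₜ[k]
            v (i.succAbove j) := by
        conv_lhs => rw [← key]
        rw [TensorProduct.tmul_sum, ← Finset.sum_add_distrib]
        congr 1; funext j
        rw [TensorProduct.add_tmul, TensorProduct.smul_tmul]

theorem exists_dual {n : ℕ} {v : Fin n → M} (hv : LinearIndependent k v) :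
    ∃ φ : Fin n → (M →ₗ[k] k), ∀ i j, φ i (v j) = if j = i then 1 else 0 := by
  classical
  set W := Submodule.span k (Set.range v)
  let b : Module.Basis (Fin n) k W := Module.Basis.span hv
  obtain ⟨W', hW'⟩ := Submodule.exists_isCompl W
  let pr : M →ₗ[k] W := W.linearProjOfIsCompl W' hW'
  refine ⟨fun i => (b.coord i) ∘ₗ pr, fun i j => ?_⟩
  have hv' : v j = (b j : M) := (congrArg Subtype.val (Module.Basis.span_apply hv j)).symm
  have : pr (v j) = b j := by
    rw [hv']; exact Submodule.linearProjOfIsCompl_apply_left hW' (b j)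
  simp only [LinearMap.comp_apply, this, Module.Basis.coord_apply, Module.Basis.repr_self]
  rw [Finsupp.single_apply]

theorem mem_tpS_of_ctr {p : Submodule k M} {q : Submodule k N} {t : M ⊗[k] N}
    (hR : ∀ φ : N →ₗ[k] k, ctrR φ t ∈ p) (hL : ∀ ψ : M →ₗ[k] k, ctrL ψ t ∈ q) :
    t ∈ tpS p q := by
  obtain ⟨n, u, v, ht, hu, hv⟩ := exists_rep_li t
  obtain ⟨φ, hφ⟩ := exists_dual hv
  obtain ⟨ψ, hψ⟩ := exists_dual hu
  have hui : ∀ i, u i ∈ p := by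
    intro i
    have h : ctrR (φ i) t = u i := by
      rw [ht, map_sum]
      simp only [ctrR_tmul, hφ, ite_smul, one_smul, zero_smul]
      rw [Finset.sum_ite_eq' Finset.univ i u]
      simp
    rw [← h]; exact hR (φ i)
  have hvi : ∀ i, v i ∈ q := by
    intro i
    have h : ctrL (ψ i) t = v i := by
      rw [ht, map_sum]
      simp only [ctrL_tmul, hψ, ite_smul, one_smul, zero_smul]
      rw [Finset.sum_ite_eq' Finset.univ i v]
      simp
    rw [← h]; exact hL (ψ i)
  rw [ht]
  exact Submodule.sum_mem _ fun i _ => tmul_mem_tpS (hui i) (hvi i)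

end Basic

section Graded
variable {B : Type*} [AddCommGroup B] [Module k B] {θ : ℕ}
variable (𝒜 : (Fin θ → ℤ) → Submodule k B) [DirectSum.Decomposition 𝒜]

def proj (α : Fin θ → ℤ) : B →ₗ[k] B :=
  (𝒜 α).subtype ∘ₗ (DirectSum.component k (Fin θ → ℤ) (fun β => 𝒜 β) α) ∘ₗ
    (DirectSum.decomposeLinearEquiv 𝒜).toLinearMap

theorem proj_apply (α : Fin θ → ℤ) (x : B) :
    proj 𝒜 α x = (DirectSum.decompose 𝒜 x α : B) := rfl

theorem proj_mem (α : Fin θ → ℤ) (x : B) : proj 𝒜 α x ∈ 𝒜 α := by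
  rw [proj_apply]; exact SetLike.coe_mem _

theorem proj_of_mem_same {α : Fin θ → ℤ} {x : B} (hx : x ∈ 𝒜 α) : proj 𝒜 α x = x := by
  rw [proj_apply]; exact DirectSum.decompose_of_mem_same 𝒜 hx

theorem proj_of_mem_ne {α β : Fin θ → ℤ} {x : B} (hx : x ∈ 𝒜 β) (h : β ≠ α) :
    proj 𝒜 α x = 0 := by
  rw [proj_apply]; exact DirectSum.decompose_of_mem_ne 𝒜 hx h

theorem proj_sum (x : B) : ∃ s : Finset (Fin θ → ℤ),
    (∀ α ∉ s, proj 𝒜 α x = 0) ∧ x = ∑ α ∈ s, proj 𝒜 α x := by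
  classical
  refine ⟨(DirectSum.decompose 𝒜 x).support, fun α hα => ?_, ?_⟩
  · rw [proj_apply]
    rw [DFinsupp.notMem_support_iff.mp hα]
    rfl
  · conv_lhs => rw [← DirectSum.sum_support_decompose 𝒜 x]
    exact Finset.sum_congr rfl fun α _ => (proj_apply 𝒜 α x).symm

theorem ext_on_grades {V : Type*} [AddCommGroup V] [Module k V] {f g : B →ₗ[k] V}
    (h : ∀ γ : Fin θ → ℤ, ∀ u ∈ 𝒜 γ, f u = g u) (x : B) : f x = g x := by
  have htop : (⊤ : Submodule k B) ≤ LinearMap.ker (f - g) := by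
    rw [← (DirectSum.Decomposition.isInternal 𝒜).submodule_iSup_eq_top]
    refine iSup_le fun γ => fun u hu => ?_
    rw [LinearMap.mem_ker, LinearMap.sub_apply, sub_eq_zero]
    exact h γ u hu
  have := htop (Submodule.mem_top : x ∈ ⊤)
  rw [LinearMap.mem_ker, LinearMap.sub_apply, sub_eq_zero] at this
  exact this

theorem piece_le_sup {S : (Fin θ → ℤ) → Prop} {α : Fin θ → ℤ} (hα : S α) :
    𝒜 α ≤ ⨆ β, ⨆ _ : S β, 𝒜 β := le_iSup₂ (f := fun β (_ : S β) => 𝒜 β) α hα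

theorem proj_eq_zero_of_mem_sup {S : (Fin θ → ℤ) → Prop} {x : B}
    (hx : x ∈ ⨆ β, ⨆ _ : S β, 𝒜 β) {α : Fin θ → ℤ} (hα : ¬ S α) : proj 𝒜 α x = 0 := by
  have : (⨆ β, ⨆ _ : S β, 𝒜 β) ≤ LinearMap.ker (proj 𝒜 α) := by
    refine iSup₂_le fun β hβ => fun u hu => ?_
    rw [LinearMap.mem_ker]
    exact proj_of_mem_ne 𝒜 hu (fun hc => hα (hc ▸ hβ))
  exact this hx

theorem mem_sup_of_proj {S : (Fin θ → ℤ) → Prop} {x : B}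
    (h : ∀ α, ¬ S α → proj 𝒜 α x = 0) : x ∈ ⨆ β, ⨆ _ : S β, 𝒜 β := by
  obtain ⟨s, hs1, hs2⟩ := proj_sum 𝒜 x
  rw [hs2]
  refine Submodule.sum_mem _ fun α _ => ?_
  by_cases hS : S α
  · exact piece_le_sup 𝒜 hS (proj_mem 𝒜 α x)
  · rw [h α hS]; exact zero_mem _

theorem rTensor_proj_sum (t : B ⊗[k] B) : ∃ s : Finset (Fin θ → ℤ),
    (∀ α ∉ s, (proj 𝒜 α).rTensor B t = 0) ∧ t = ∑ α ∈ s, (proj 𝒜 α).rTensor B t := by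
  classical
  obtain ⟨F, hF⟩ := TensorProduct.exists_finset t
  choose sfun hs1 hs2 using fun a : B => proj_sum 𝒜 a
  refine ⟨F.biUnion (fun x => sfun x.1), fun p hp => ?_, ?_⟩
  · rw [hF, map_sum]
    refine Finset.sum_eq_zero fun x hx => ?_
    rw [LinearMap.rTensor_tmul,
      hs1 x.1 p (fun hmem => hp (Finset.mem_biUnion.mpr ⟨x, hx, hmem⟩)), zero_tmul]
  · conv_lhs => rw [hF]
    conv_rhs => rw [hF]
    simp only [map_sum, LinearMap.rTensor_tmul]
    rw [Finset.sum_comm]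
    refine Finset.sum_congr rfl fun x hx => ?_
    rw [← TensorProduct.sum_tmul]
    congr 1
    have heq : ∑ p ∈ sfun x.1, proj 𝒜 p x.1 = ∑ p ∈ F.biUnion (fun y => sfun y.1), proj 𝒜 p x.1 :=
      Finset.sum_subset (fun p hmem => Finset.mem_biUnion.mpr ⟨x, hx, hmem⟩)
        (fun p _ hp => hs1 x.1 p hp)
    rw [← heq]
    exact hs2 x.1

end Graded




section InnerZ
variable {θ : ℕ} (α β ω : Fin θ → ℤ)

theorem innerZ_add : innerZ (α + β) ω = innerZ α ω + innerZ β ω := by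
  simp [innerZ, add_mul, Finset.sum_add_distrib]

theorem innerZ_zero : innerZ (0 : Fin θ → ℤ) ω = 0 := by simp [innerZ]

end InnerZ

section Bialg
variable {B : Type*} [Ring B] [Bialgebra k B] {θ : ℕ}
variable (𝒜 : (Fin θ → ℤ) → Submodule k B) [DirectSum.Decomposition 𝒜] (ω : Fin θ → ℤ)

local notation "Δ" => (Coalgebra.comul (R := k) (A := B))

/-- `⨆_{S α} 𝒜 α`. -/
abbrev MS (S : (Fin θ → ℤ) → Prop) : Submodule k B := ⨆ α, ⨆ _ : S α, 𝒜 α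

/-- `⨆_{S pq} 𝒜 pq.1 ⊗ 𝒜 pq.2`. -/
abbrev M2 (S : (Fin θ → ℤ) × (Fin θ → ℤ) → Prop) : Submodule k (B ⊗[k] B) :=
  ⨆ pq, ⨆ _ : S pq, tpS (𝒜 pq.1) (𝒜 pq.2)

theorem sup_mul_sup (hmul : ∀ (α β : Fin θ → ℤ) (x y : B), x ∈ 𝒜 α → y ∈ 𝒜 β → x * y ∈ 𝒜 (α + β))
    {S1 S2 S3 : (Fin θ → ℤ) → Prop} (h : ∀ a b, S1 a → S2 b → S3 (a + b))
    {x y : B} (hx : x ∈ MS 𝒜 S1) (hy : y ∈ MS 𝒜 S2) : x * y ∈ MS 𝒜 S3 := by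
  have step1 : ∀ (β : Fin θ → ℤ) (b : B), S2 β → b ∈ 𝒜 β →
      ∀ x' ∈ MS 𝒜 S1, x' * b ∈ MS 𝒜 S3 := by
    intro β b hβ hb x' hx'
    have hle : MS 𝒜 S1 ≤ (MS 𝒜 S3).comap (LinearMap.mulRight k b) := by
      refine iSup₂_le fun a ha => fun u hu => ?_
      simp only [Submodule.mem_comap, LinearMap.mulRight_apply]
      exact piece_le_sup 𝒜 (h a β ha hβ) (hmul a β u b hu hb)
    exact hle hx'
  have hle2 : MS 𝒜 S2 ≤ (MS 𝒜 S3).comap (LinearMap.mulLeft k x) := by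
    refine iSup₂_le fun β hβ => fun b hb => ?_
    simp only [Submodule.mem_comap, LinearMap.mulLeft_apply]
    exact step1 β b hβ hb x hx
  exact hle2 hy

theorem M2_mono {S S' : (Fin θ → ℤ) × (Fin θ → ℤ) → Prop} (h : ∀ pq, S pq → S' pq) :
    M2 𝒜 S ≤ M2 𝒜 S' :=
  iSup₂_le fun pq hpq => le_iSup₂ (f := fun pq (_ : S' pq) => tpS (𝒜 pq.1) (𝒜 pq.2)) pq (h pq hpq)

theorem proj2_eq_zero_of_mem_M2 {S : (Fin θ → ℤ) × (Fin θ → ℤ) → Prop} {t : B ⊗[k] B}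
    (ht : t ∈ M2 𝒜 S) {pq : (Fin θ → ℤ) × (Fin θ → ℤ)} (h : ¬ S pq) :
    TensorProduct.map (proj 𝒜 pq.1) (proj 𝒜 pq.2) t = 0 := by
  have hle : M2 𝒜 S ≤ LinearMap.ker (TensorProduct.map (proj 𝒜 pq.1) (proj 𝒜 pq.2)) := by
    refine iSup₂_le fun ab hab => fun u hu => ?_
    rw [LinearMap.mem_ker]
    refine tpS_ind (P := fun u => TensorProduct.map (proj 𝒜 pq.1) (proj 𝒜 pq.2) u = 0)
      (map_zero _) ?_ ?_ u hu
    · intro a ha b hb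
      show TensorProduct.map (proj 𝒜 pq.1) (proj 𝒜 pq.2) (a ⊗ₜ[k] b) = 0
      rw [TensorProduct.map_tmul]
      by_cases h1 : ab.1 = pq.1
      · have h2 : ab.2 ≠ pq.2 := fun h2 => h (Prod.ext h1 h2 ▸ hab)
        rw [proj_of_mem_ne 𝒜 hb h2, tmul_zero]
      · rw [proj_of_mem_ne 𝒜 ha h1, zero_tmul]
    · intro s t hs ht
      show TensorProduct.map (proj 𝒜 pq.1) (proj 𝒜 pq.2) (s + t) = 0
      rw [map_add, hs, ht, add_zero]
  exact hle ht

theorem comul_mem_M2 (hcomul : ∀ (γ : Fin θ → ℤ), ∀ x ∈ 𝒜 γ,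
      Δ x ∈ M2 𝒜 (fun pq => pq.1 + pq.2 = γ))
    {S : (Fin θ → ℤ) → Prop} {x : B} (hx : x ∈ MS 𝒜 S)
    {S2 : (Fin θ → ℤ) × (Fin θ → ℤ) → Prop}
    (h : ∀ γ pq, S γ → pq.1 + pq.2 = γ → S2 pq) : Δ x ∈ M2 𝒜 S2 := by
  have hle : MS 𝒜 S ≤ (M2 𝒜 S2).comap Δ := by
    refine iSup₂_le fun γ hγ => fun u hu => ?_
    exact M2_mono 𝒜 (fun pq hpq => h γ pq hγ hpq) (hcomul γ u hu)
  exact hle hx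

theorem rTensor_eq_map (f : B →ₗ[k] B) :
    f.rTensor B = TensorProduct.map f LinearMap.id := rfl

theorem lTensor_eq_map {P : Type*} [AddCommGroup P] [Module k P] (g : B →ₗ[k] P) :
    g.lTensor B = TensorProduct.map LinearMap.id g := rfl

theorem ctrR_counit_comul (x : B) : ctrR (Coalgebra.counit (R := k)) (Δ x) = x := by
  have hmap : (ctrR (M := B) (Coalgebra.counit (R := k) (A := B)))
      = (TensorProduct.rid k B).toLinearMap ∘ₗ (Coalgebra.counit (R := k)).lTensor B := by
    apply TensorProduct.ext'
    intro a b
    simp [ctrR_tmul]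
  rw [hmap, LinearMap.comp_apply, Coalgebra.lTensor_counit_comul]
  simp

theorem comul_ctrR (φ : B →ₗ[k] k) (z : B ⊗[k] B) :
    Δ (ctrR φ z) = ctrR (M := B ⊗[k] B) φ ((Coalgebra.comul (R := k)).rTensor B z) := by
  induction z using TensorProduct.induction_on with
  | zero => simp
  | tmul a b => simp [map_smul]
  | add s t hs ht => simp only [map_add, hs, ht]

theorem comul_ctrL (ψ : B →ₗ[k] k) (z : B ⊗[k] B) :
    Δ (ctrL ψ z) = ctrL (N := B ⊗[k] B) ψ ((Coalgebra.comul (R := k)).lTensor B z) := by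
  induction z using TensorProduct.induction_on with
  | zero => simp
  | tmul a b => simp [map_smul]
  | add s t hs ht => simp only [map_add, hs, ht]

theorem ctrR_assoc_symm (φ : B →ₗ[k] k) (z : B ⊗[k] (B ⊗[k] B)) :
    ctrR (M := B ⊗[k] B) φ ((TensorProduct.assoc k B B B).symm z)
      = (ctrR (M := B) φ).lTensor B z := by
  induction z using TensorProduct.induction_on with
  | zero => simp
  | tmul a w =>
    induction w using TensorProduct.induction_on with
    | zero => simp
    | tmul b c => simp [TensorProduct.assoc_symm_tmul]
    | add w1 w2 h1 h2 => simp only [tmul_add, map_add, h1, h2]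
  | add s t hs ht => simp only [map_add, hs, ht]

theorem rTensor_assoc (f : B →ₗ[k] B) (z : (B ⊗[k] B) ⊗[k] B) :
    f.rTensor (B ⊗[k] B) ((TensorProduct.assoc k B B B) z)
      = (TensorProduct.assoc k B B B) ((f.rTensor B).rTensor B z) := by
  induction z using TensorProduct.induction_on with
  | zero => simp
  | tmul w c =>
    induction w using TensorProduct.induction_on with
    | zero => simp
    | tmul a b => simp [TensorProduct.assoc_tmul]
    | add w1 w2 h1 h2 => simp only [add_tmul, map_add, h1, h2]
  | add s t hs ht => simp only [map_add, hs, ht]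

theorem ctrR_rTensor (φ : B →ₗ[k] k) (g : B →ₗ[k] B) (z : B ⊗[k] B) :
    ctrR φ (g.rTensor B z) = g (ctrR φ z) := by
  induction z using TensorProduct.induction_on with
  | zero => simp
  | tmul a b => simp [map_smul]
  | add s t hs ht => simp only [map_add, hs, ht]

theorem ctrL_lTensor (ψ : B →ₗ[k] k) (g : B →ₗ[k] B) (z : B ⊗[k] B) :
    ctrL ψ (g.lTensor B z) = g (ctrL ψ z) := by
  induction z using TensorProduct.induction_on with
  | zero => simp
  | tmul a b => simp [map_smul]
  | add s t hs ht => simp only [map_add, hs, ht]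

theorem assoc_mem {p q : Submodule k B} {z : (B ⊗[k] B) ⊗[k] B}
    (hz : z ∈ tpS (tpS p q) (⊤ : Submodule k B)) :
    (TensorProduct.assoc k B B B) z ∈ tpS p (tpS q (⊤ : Submodule k B)) := by
  refine tpS_ind (P := fun z => (TensorProduct.assoc k B B B) z ∈ tpS p (tpS q ⊤))
    (by simp only [map_zero]; exact zero_mem _) ?_ ?_ z hz
  · intro w hw c _
    show (TensorProduct.assoc k B B B) (w ⊗ₜ[k] c) ∈ _
    refine tpS_ind (P := fun w => (TensorProduct.assoc k B B B) (w ⊗ₜ[k] c) ∈ tpS p (tpS q ⊤))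
      ?_ ?_ ?_ w hw
    · show (TensorProduct.assoc k B B B) ((0 : B ⊗[k] B) ⊗ₜ[k] c) ∈ _
      simp only [zero_tmul, map_zero]; exact zero_mem _
    · intro a ha b hb
      show (TensorProduct.assoc k B B B) ((a ⊗ₜ[k] b) ⊗ₜ[k] c) ∈ _
      rw [TensorProduct.assoc_tmul]
      exact tmul_mem_tpS ha (tmul_mem_tpS hb trivial)
    · intro s t hs ht
      show (TensorProduct.assoc k B B B) ((s + t) ⊗ₜ[k] c) ∈ _
      simp only [add_tmul, map_add]; exact add_mem hs ht
  · intro s t hs ht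
    show (TensorProduct.assoc k B B B) (s + t) ∈ _
    simp only [map_add]; exact add_mem hs ht

theorem tpS_mono {M N : Type*} [AddCommGroup M] [AddCommGroup N] [Module k M] [Module k N]
    {p p' : Submodule k M} {q q' : Submodule k N} (hp : p ≤ p') (hq : q ≤ q') :
    tpS p q ≤ tpS p' q' := fun t ht =>
  tpS_ind (p := p) (q := q) (P := fun t => t ∈ tpS p' q') (zero_mem _)
    (fun a ha b hb => tmul_mem_tpS (hp ha) (hq hb)) (fun s t hs ht => add_mem hs ht) t ht

/-- If the first legs of `t` lie in `B_{≥0}` (i.e. `t ∈ B_{≥0} ⊗ B`), the `p`-component of the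
first leg vanishes unless `0 ≤ (p|ω)`. -/
theorem rTensor_proj_eq_zero_of_ge {S : (Fin θ → ℤ) → Prop} {t : B ⊗[k] B}
    (ht : t ∈ tpS (MS 𝒜 S) (⊤ : Submodule k B)) {p : Fin θ → ℤ} (hp : ¬ S p) :
    (proj 𝒜 p).rTensor B t = 0 := by
  refine tpS_ind (P := fun t => (proj 𝒜 p).rTensor B t = 0) (map_zero _) ?_ ?_ t ht
  · intro a ha b _
    show (proj 𝒜 p).rTensor B (a ⊗ₜ[k] b) = 0
    rw [LinearMap.rTensor_tmul, proj_eq_zero_of_mem_sup 𝒜 ha hp, zero_tmul]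
  · intro s t hs ht
    show (proj 𝒜 p).rTensor B (s + t) = 0
    rw [map_add, hs, ht, add_zero]

theorem map_proj_eq_zero_of_ge {S : (Fin θ → ℤ) → Prop} {t : B ⊗[k] B}
    (ht : t ∈ tpS (MS 𝒜 S) (⊤ : Submodule k B)) {p : Fin θ → ℤ} (hp : ¬ S p) (q : Fin θ → ℤ) :
    TensorProduct.map (proj 𝒜 p) (proj 𝒜 q) t = 0 := by
  refine tpS_ind (P := fun t => TensorProduct.map (proj 𝒜 p) (proj 𝒜 q) t = 0) (map_zero _)
    ?_ ?_ t ht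
  · intro a ha b _
    show TensorProduct.map (proj 𝒜 p) (proj 𝒜 q) (a ⊗ₜ[k] b) = 0
    rw [TensorProduct.map_tmul, proj_eq_zero_of_mem_sup 𝒜 ha hp, zero_tmul]
  · intro s t hs ht
    show TensorProduct.map (proj 𝒜 p) (proj 𝒜 q) (s + t) = 0
    rw [map_add, hs, ht, add_zero]

theorem rTensor_proj_eq_map_on_M2 {α p : Fin θ → ℤ} {t : B ⊗[k] B}
    (ht : t ∈ M2 𝒜 (fun pq => pq.1 + pq.2 = α)) :
    (proj 𝒜 p).rTensor B t = TensorProduct.map (proj 𝒜 p) (proj 𝒜 (α - p)) t := by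
  have hle : M2 𝒜 (fun pq => pq.1 + pq.2 = α) ≤
      LinearMap.ker ((proj 𝒜 p).rTensor B - TensorProduct.map (proj 𝒜 p) (proj 𝒜 (α - p))) := by
    refine iSup₂_le fun ab hab => fun u hu => ?_
    rw [LinearMap.mem_ker]
    refine tpS_ind (P := fun u =>
      ((proj 𝒜 p).rTensor B - TensorProduct.map (proj 𝒜 p) (proj 𝒜 (α - p))) u = 0)
      (map_zero _) ?_ ?_ u hu
    · intro a ha b hb
      show ((proj 𝒜 p).rTensor B - TensorProduct.map (proj 𝒜 p) (proj 𝒜 (α - p))) (a ⊗ₜ[k] b) = 0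
      rw [LinearMap.sub_apply, LinearMap.rTensor_tmul, TensorProduct.map_tmul, sub_eq_zero]
      by_cases h1 : ab.1 = p
      · have hb2 : b ∈ 𝒜 (α - p) := by
          have : ab.2 = α - p := by rw [← hab, h1]; abel
          rw [← this]; exact hb
        rw [proj_of_mem_same 𝒜 hb2]
      · rw [proj_of_mem_ne 𝒜 ha h1, zero_tmul, zero_tmul]
    · intro s t hs ht
      show ((proj 𝒜 p).rTensor B - TensorProduct.map (proj 𝒜 p) (proj 𝒜 (α - p))) (s + t) = 0
      rw [map_add, hs, ht, add_zero]
  have := hle ht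
  rw [LinearMap.mem_ker, LinearMap.sub_apply, sub_eq_zero] at this
  exact this

theorem map_proj_comul_proj (hcomul : ∀ (γ : Fin θ → ℤ), ∀ x ∈ 𝒜 γ,
      Δ x ∈ M2 𝒜 (fun pq => pq.1 + pq.2 = γ))
    {p q α : Fin θ → ℤ} (hpq : p + q = α) (x : B) :
    TensorProduct.map (proj 𝒜 p) (proj 𝒜 q) (Δ (proj 𝒜 α x))
      = TensorProduct.map (proj 𝒜 p) (proj 𝒜 q) (Δ x) := by
  have h := ext_on_grades 𝒜
    (f := TensorProduct.map (proj 𝒜 p) (proj 𝒜 q) ∘ₗ (Coalgebra.comul (R := k)) ∘ₗ proj 𝒜 α)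
    (g := TensorProduct.map (proj 𝒜 p) (proj 𝒜 q) ∘ₗ (Coalgebra.comul (R := k))) ?_ x
  · simpa using h
  · intro γ u hu
    simp only [LinearMap.comp_apply]
    by_cases hγ : γ = α
    · rw [proj_of_mem_same 𝒜 (show u ∈ 𝒜 α from hγ ▸ hu)]
    · rw [proj_of_mem_ne 𝒜 hu hγ, map_zero, map_zero]
      exact (proj2_eq_zero_of_mem_M2 𝒜 (hcomul γ u hu)
        (pq := (p, q)) (fun hc => hγ (by rw [← hpq, hc]))).symm

theorem mem_tpS_MS_top_of_proj {S : (Fin θ → ℤ) → Prop} {t : B ⊗[k] B}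
    (h : ∀ p, ¬ S p → (proj 𝒜 p).rTensor B t = 0) :
    t ∈ tpS (MS 𝒜 S) (⊤ : Submodule k B) := by
  obtain ⟨s, _, hs2⟩ := rTensor_proj_sum 𝒜 t
  rw [hs2]
  refine Submodule.sum_mem _ fun α _ => ?_
  by_cases hS : S α
  · have : (proj 𝒜 α).rTensor B t ∈ tpS (𝒜 α) (⊤ : Submodule k B) := by
      rw [rTensor_eq_map]
      exact map_tpS _ _ (fun a _ => proj_mem 𝒜 α a) (fun b _ => Submodule.mem_top) (mem_tpS_top_top t)
    exact tpS_mono (piece_le_sup 𝒜 hS) le_rfl this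
  · rw [h α hS]; exact zero_mem _

/-- Stability of `K_{≥0}` under the degree projections. -/
theorem comul_proj_mem (hcomul : ∀ (γ : Fin θ → ℤ), ∀ x ∈ 𝒜 γ,
      Δ x ∈ M2 𝒜 (fun pq => pq.1 + pq.2 = γ))
    {S : (Fin θ → ℤ) → Prop} {x : B} (hx : Δ x ∈ tpS (MS 𝒜 S) (⊤ : Submodule k B))
    (α : Fin θ → ℤ) : Δ (proj 𝒜 α x) ∈ tpS (MS 𝒜 S) (⊤ : Submodule k B) := by
  refine mem_tpS_MS_top_of_proj 𝒜 fun p hp => ?_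
  rw [rTensor_proj_eq_map_on_M2 𝒜 (α := α) (hcomul α _ (proj_mem 𝒜 α x)),
    map_proj_comul_proj 𝒜 hcomul (add_sub_cancel p α) x]
  exact map_proj_eq_zero_of_ge 𝒜 hx hp (α - p)

/-- For homogeneous components of degree `α` with `(α|ω) = 0`, the `α`-component of the first
leg of `Δ u`, for `u ∈ B_{≥0}`, lies in `𝒜 α ⊗ B_{≥0}`. -/
theorem rTensor_proj_comul_mem_of_ge (hcomul : ∀ (γ : Fin θ → ℤ), ∀ x ∈ 𝒜 γ,
      Δ x ∈ M2 𝒜 (fun pq => pq.1 + pq.2 = γ))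
    {α : Fin θ → ℤ} (hα : innerZ α ω = 0) {u : B}
    (hu : u ∈ MS 𝒜 (fun γ => 0 ≤ innerZ γ ω)) :
    (proj 𝒜 α).rTensor B (Δ u) ∈ tpS (𝒜 α) (MS 𝒜 (fun γ => 0 ≤ innerZ γ ω)) := by
  have hle : MS 𝒜 (fun γ => 0 ≤ innerZ γ ω) ≤
      (tpS (𝒜 α) (MS 𝒜 (fun γ => 0 ≤ innerZ γ ω))).comap
        (((proj 𝒜 α).rTensor B) ∘ₗ (Coalgebra.comul (R := k))) := by
    refine iSup₂_le fun γ hγ => fun u hu => ?_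
    simp only [Submodule.mem_comap, LinearMap.comp_apply]
    have h2 : M2 𝒜 (fun pq => pq.1 + pq.2 = γ) ≤
        (tpS (𝒜 α) (MS 𝒜 (fun γ => 0 ≤ innerZ γ ω))).comap ((proj 𝒜 α).rTensor B) := by
      refine iSup₂_le fun pq hpq => fun w hw => ?_
      simp only [Submodule.mem_comap]
      refine tpS_ind (P := fun w => (proj 𝒜 α).rTensor B w ∈
        tpS (𝒜 α) (MS 𝒜 (fun γ => 0 ≤ innerZ γ ω)))
        (by show (proj 𝒜 α).rTensor B (0 : B ⊗[k] B) ∈ _; rw [map_zero]; exact zero_mem _)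
        ?_ ?_ w hw
      · intro a ha b hb
        show (proj 𝒜 α).rTensor B (a ⊗ₜ[k] b) ∈ _
        rw [LinearMap.rTensor_tmul]
        by_cases h1 : pq.1 = α
        · rw [proj_of_mem_same 𝒜 (show a ∈ 𝒜 α from h1 ▸ ha)]
          have hb' : 0 ≤ innerZ pq.2 ω := by
            have hsum : innerZ pq.1 ω + innerZ pq.2 ω = innerZ γ ω := by
              rw [← innerZ_add, hpq]
            have h1' : innerZ pq.1 ω = 0 := by rw [h1, hα]
            omega
          exact tmul_mem_tpS (h1 ▸ ha) (piece_le_sup 𝒜 hb' hb)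
        · rw [proj_of_mem_ne 𝒜 ha h1, zero_tmul]; exact zero_mem _
      · intro s t hs ht
        show (proj 𝒜 α).rTensor B (s + t) ∈ _
        rw [map_add]; exact add_mem hs ht
    exact h2 (hcomul γ u hu)
  exact hle hu

/-- Right contractions of `Δ x` stay in `K_{≥0}` (coassociativity argument). -/
theorem comul_ctrR_comul_mem {x : B}
    (hx : Δ x ∈ tpS (MS 𝒜 (fun γ => 0 ≤ innerZ γ ω)) (⊤ : Submodule k B)) (φ : B →ₗ[k] k) :
    Δ (ctrR φ (Δ x)) ∈ tpS (MS 𝒜 (fun γ => 0 ≤ innerZ γ ω)) (⊤ : Submodule k B) := by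
  rw [comul_ctrR, ← Coalgebra.coassoc_symm_apply, ctrR_assoc_symm, ← LinearMap.comp_apply,
    ← LinearMap.lTensor_comp, lTensor_eq_map]
  exact map_tpS _ _ (fun a ha => ha) (fun b _ => Submodule.mem_top) hx

/-- Left contractions of the `α`-component (first leg, `(α|ω)=0`) of `Δ x` stay in `K_{≥0}`. -/
theorem comul_ctrL_rTensor_proj_mem (hcomul : ∀ (γ : Fin θ → ℤ), ∀ x ∈ 𝒜 γ,
      Δ x ∈ M2 𝒜 (fun pq => pq.1 + pq.2 = γ))
    {α : Fin θ → ℤ} (hα : innerZ α ω = 0) {x : B}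
    (hx : Δ x ∈ tpS (MS 𝒜 (fun γ => 0 ≤ innerZ γ ω)) (⊤ : Submodule k B)) (ψ : B →ₗ[k] k) :
    Δ (ctrL ψ ((proj 𝒜 α).rTensor B (Δ x)))
      ∈ tpS (MS 𝒜 (fun γ => 0 ≤ innerZ γ ω)) (⊤ : Submodule k B) := by
  rw [comul_ctrL]
  have hrw : (Coalgebra.comul (R := k)).lTensor B ((proj 𝒜 α).rTensor B (Δ x))
      = (TensorProduct.assoc k B B B)
          ((((proj 𝒜 α).rTensor B) ∘ₗ (Coalgebra.comul (R := k))).rTensor B (Δ x)) := by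
    rw [LinearMap.rTensor_comp, LinearMap.comp_apply, ← rTensor_assoc,
      Coalgebra.coassoc_apply, lTensor_rTensor_apply, rTensor_lTensor_apply]
  rw [hrw]
  have h1 : (((proj 𝒜 α).rTensor B) ∘ₗ (Coalgebra.comul (R := k))).rTensor B (Δ x)
      ∈ tpS (tpS (𝒜 α) (MS 𝒜 (fun γ => 0 ≤ innerZ γ ω))) (⊤ : Submodule k B) := by
    rw [rTensor_eq_map]
    exact map_tpS _ _ (fun a ha => rTensor_proj_comul_mem_of_ge 𝒜 ω hcomul hα ha)
      (fun b _ => Submodule.mem_top) hx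
  have h2 := assoc_mem h1
  exact ctrL_mem_tpS h2 ψ

/-- Left contractions of the `α`-component of `Δ x` lie in `B_{>0}` when `x ∈ B_{>0}` and
`(α|ω) = 0`. -/
theorem ctrL_rTensor_proj_mem_gt (hcomul : ∀ (γ : Fin θ → ℤ), ∀ x ∈ 𝒜 γ,
      Δ x ∈ M2 𝒜 (fun pq => pq.1 + pq.2 = γ))
    {x : B} (hx : x ∈ MS 𝒜 (fun γ => 0 < innerZ γ ω))
    {α : Fin θ → ℤ} (hα : innerZ α ω = 0) (ψ : B →ₗ[k] k) :
    ctrL ψ ((proj 𝒜 α).rTensor B (Δ x)) ∈ MS 𝒜 (fun γ => 0 < innerZ γ ω) := by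
  refine mem_sup_of_proj 𝒜 fun q hq => ?_
  have hΔ : Δ x ∈ M2 𝒜 (fun pq => 0 < innerZ (pq.1 + pq.2) ω) :=
    comul_mem_M2 𝒜 hcomul hx (fun γ pq hγ hpq => by rw [hpq]; exact hγ)
  rw [← ctrL_lTensor, lTensor_rTensor_apply,
    proj2_eq_zero_of_mem_M2 𝒜 hΔ (pq := (α, q)) (by simp only [innerZ_add, hα, zero_add]; exact hq),
    map_zero]

/-- `B_{≥0} ⊗ B` is closed under multiplication in `B ⊗ B`. -/
theorem tpS_mul_closed {p : Submodule k B} (hp : ∀ a ∈ p, ∀ c ∈ p, a * c ∈ p)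
    {t s : B ⊗[k] B} (ht : t ∈ tpS p (⊤ : Submodule k B)) (hs : s ∈ tpS p (⊤ : Submodule k B)) :
    t * s ∈ tpS p (⊤ : Submodule k B) := by
  refine tpS_ind (P := fun t => t * s ∈ tpS p ⊤)
    (by show (0 : B ⊗[k] B) * s ∈ _; rw [zero_mul]; exact zero_mem _)
    ?_ (fun t1 t2 h1 h2 => by show (t1 + t2) * s ∈ _; rw [add_mul]; exact add_mem h1 h2) t ht
  intro a ha b _
  refine tpS_ind (P := fun s => a ⊗ₜ[k] b * s ∈ tpS p ⊤)
    (by show a ⊗ₜ[k] b * (0 : B ⊗[k] B) ∈ _; rw [mul_zero]; exact zero_mem _)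
    ?_ (fun s1 s2 h1 h2 => by show a ⊗ₜ[k] b * (s1 + s2) ∈ _; rw [mul_add]; exact add_mem h1 h2)
    s hs
  intro c hc d _
  rw [Algebra.TensorProduct.tmul_mul_tmul]
  exact tmul_mem_tpS (hp a ha c hc) Submodule.mem_top
end Bialg
end St5


/-- `K_{>0}` is a two-sided ideal of the algebra `K_{≥0}` and a coideal of `B`:
`Δ(K_{>0}) ⊆ K_{≥0} ⊗ K_{>0} + K_{>0} ⊗ B` and `ε(K_{>0}) = 0`. -/
theorem statement5 (hθ : 0 < θ)
    (𝒜 : (Fin θ → ℤ) → Submodule k B)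
    (hinternal : DirectSum.IsInternal 𝒜)
    (hone : (1 : B) ∈ 𝒜 0)
    (hmul : ∀ (α β : Fin θ → ℤ) (x y : B), x ∈ 𝒜 α → y ∈ 𝒜 β → x * y ∈ 𝒜 (α + β))
    (hcomul : ∀ (γ : Fin θ → ℤ), ∀ x ∈ 𝒜 γ,
      Coalgebra.comul (R := k) x ∈
        ⨆ (pq : (Fin θ → ℤ) × (Fin θ → ℤ)) (_ : pq.1 + pq.2 = γ), tpSub (𝒜 pq.1) (𝒜 pq.2))
    (hcounit : ∀ (γ : Fin θ → ℤ), γ ≠ 0 → ∀ x ∈ 𝒜 γ, Coalgebra.counit (R := k) x = 0)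
    (ω : Fin θ → ℤ) :
    (∀ x y : B, x ∈ Kge 𝒜 ω → y ∈ Kgt 𝒜 ω → x * y ∈ Kgt 𝒜 ω) ∧
    (∀ x y : B, x ∈ Kgt 𝒜 ω → y ∈ Kge 𝒜 ω → x * y ∈ Kgt 𝒜 ω) ∧
    (∀ x ∈ Kgt 𝒜 ω, Coalgebra.comul (R := k) x ∈
      tpSub (Kge 𝒜 ω) (Kgt 𝒜 ω) ⊔ tpSub (Kgt 𝒜 ω) ⊤) ∧
    (∀ x ∈ Kgt 𝒜 ω, Coalgebra.counit (R := k) x = 0) := by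
  classical
  haveI : DirectSum.Decomposition 𝒜 := hinternal.chooseDecomposition
  have hcomul' : ∀ (γ : Fin θ → ℤ), ∀ x ∈ 𝒜 γ,
      Coalgebra.comul (R := k) x ∈ St5.M2 𝒜 (fun pq => pq.1 + pq.2 = γ) := hcomul
  have hge_mul : ∀ a ∈ Bge 𝒜 ω, ∀ c ∈ Bge 𝒜 ω, a * c ∈ Bge 𝒜 ω := fun a ha c hc =>
    St5.sup_mul_sup 𝒜 hmul (S3 := fun γ => 0 ≤ innerZ γ ω)
      (fun p q hp hq => by show 0 ≤ innerZ (p + q) ω; rw [St5.innerZ_add]; omega) ha hc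
  have hKge_mul : ∀ x y : B, x ∈ Kge 𝒜 ω → y ∈ Kge 𝒜 ω → x * y ∈ Kge 𝒜 ω := by
    intro x y hx hy
    refine Submodule.mem_comap.mpr ?_
    rw [show (Coalgebra.comul (R := k) (x * y)) = Coalgebra.comul (R := k) x * Coalgebra.comul (R := k) y from Bialgebra.comul_mul (R := k) x y]
    exact St5.tpS_mul_closed hge_mul (Submodule.mem_comap.mp hx) (Submodule.mem_comap.mp hy)
  have hKge_Bge : ∀ x ∈ Kge 𝒜 ω, x ∈ Bge 𝒜 ω := by
    intro x hx
    rw [← St5.ctrR_counit_comul (k := k) x]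
    exact St5.ctrR_mem_tpS (Submodule.mem_comap.mp hx) _
  refine ⟨?_, ?_, ?_, ?_⟩
  · -- left ideal
    intro x y hx hy
    refine Submodule.mem_inf.mpr ⟨hKge_mul x y hx (Submodule.mem_inf.mp hy).1, ?_⟩
    exact St5.sup_mul_sup 𝒜 hmul (S3 := fun γ => 0 < innerZ γ ω)
      (fun p q hp hq => by show 0 < innerZ (p + q) ω; rw [St5.innerZ_add]; omega)
      (hKge_Bge x hx) (Submodule.mem_inf.mp hy).2
  · -- right ideal
    intro x y hx hy
    refine Submodule.mem_inf.mpr ⟨hKge_mul x y (Submodule.mem_inf.mp hx).1 hy, ?_⟩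
    exact St5.sup_mul_sup 𝒜 hmul (S3 := fun γ => 0 < innerZ γ ω)
      (fun p q hp hq => by show 0 < innerZ (p + q) ω; rw [St5.innerZ_add]; omega)
      (Submodule.mem_inf.mp hx).2 (hKge_Bge y hy)
  · -- coideal
    intro x hx
    obtain ⟨hxK, hxB⟩ := Submodule.mem_inf.mp hx
    have hD : Coalgebra.comul (R := k) x
        ∈ St5.tpS (St5.MS 𝒜 (fun γ => 0 ≤ innerZ γ ω)) (⊤ : Submodule k B) :=
      Submodule.mem_comap.mp hxK
    obtain ⟨s, hs1, hs2⟩ := St5.rTensor_proj_sum 𝒜 (Coalgebra.comul (R := k) x)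
    rw [hs2]
    refine Submodule.sum_mem _ fun α _ => ?_
    rcases lt_trichotomy (innerZ α ω) 0 with hneg | hzero | hpos
    · rw [St5.rTensor_proj_eq_zero_of_ge 𝒜 hD (p := α) (by omega)]
      exact zero_mem _
    · refine Submodule.mem_sup_left (?_ : _ ∈ tpSub (Kge 𝒜 ω) (Kgt 𝒜 ω))
      refine St5.mem_tpS_of_ctr ?_ ?_
      · intro φ
        rw [St5.ctrR_rTensor]
        exact Submodule.mem_comap.mpr
          (St5.comul_proj_mem 𝒜 hcomul' (St5.comul_ctrR_comul_mem 𝒜 ω hD φ) α)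
      · intro ψ
        refine Submodule.mem_inf.mpr ⟨?_, ?_⟩
        · exact Submodule.mem_comap.mpr
            (St5.comul_ctrL_rTensor_proj_mem 𝒜 ω hcomul' hzero hD ψ)
        · exact St5.ctrL_rTensor_proj_mem_gt 𝒜 ω hcomul' hxB hzero ψ
    · refine Submodule.mem_sup_right (?_ : _ ∈ tpSub (Kgt 𝒜 ω) ⊤)
      refine St5.mem_tpS_of_ctr ?_ (fun ψ => Submodule.mem_top)
      intro φ
      rw [St5.ctrR_rTensor]
      refine Submodule.mem_inf.mpr ⟨?_, ?_⟩
      · exact Submodule.mem_comap.mpr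
          (St5.comul_proj_mem 𝒜 hcomul' (St5.comul_ctrR_comul_mem 𝒜 ω hD φ) α)
      · exact St5.piece_le_sup 𝒜 hpos (St5.proj_mem 𝒜 α _)
  · -- counit vanishes
    intro x hx
    have hle : Bgt 𝒜 ω ≤ LinearMap.ker (Coalgebra.counit (R := k) (A := B)) := by
      refine iSup₂_le fun γ hγ => fun u hu => ?_
      have hγ0 : γ ≠ 0 := by
        intro h0
        rw [h0, St5.innerZ_zero] at hγ
        omega
      exact LinearMap.mem_ker.mpr (hcounit γ hγ0 u hu)
    exact LinearMap.mem_ker.mp (hle (Submodule.mem_inf.mp hx).2)
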